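/- Let p be a prime, d ≥ 2, and let Φ be a nonzero Laurent polynomial over 𝔽_p in the first d−1 variables. Then X_d − Φ is an irreducible element of the Laurent polynomial ring R_d = 𝔽_p[X_1^{±1},…,X_d^{±1}]. -/

import Mathlib

open AddMonoidAlgebra Finsupp Polynomial LaurentPolynomial

noncomputable section

namespace XdSubPhiAux

variable (k : Type*) [CommRing k] (n : ℕ)

/-- The embedding of exponents `ℤ^n → ℤ^{n+1}` (append `0`). -/
def iota : (Fin n → ℤ) →+ (Fin (n + 1) → ℤ) where
  toFun g := Fin.snoc g 0
  map_zero' := by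
    funext i
    refine Fin.lastCases ?_ (fun j => ?_) i <;> simp
  map_add' g g' := by
    funext i
    refine Fin.lastCases ?_ (fun j => ?_) i <;> simp

/-- `z ↦ (0,…,0,z)` as an additive hom `ℤ → ℤ^{n+1}`. -/
def zeta : ℤ →+ (Fin (n + 1) → ℤ) where
  toFun z i := if (i : ℕ) = n then z else 0
  map_zero' := by funext i; simp
  map_add' z z' := by funext i; by_cases h : (i : ℕ) = n <;> simp [h]

abbrev Rn := AddMonoidAlgebra k (Fin n → ℤ)

/-- The forward ring hom `k[ℤ^{n+1}] → (k[ℤ^n])[T;T⁻¹]`. -/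
def E : AddMonoidAlgebra k (Fin (n + 1) → ℤ) →+* LaurentPolynomial (Rn k n) :=
  AddMonoidAlgebra.liftNCRingHom
    ((LaurentPolynomial.C).comp AddMonoidAlgebra.singleZeroRingHom)
    { toFun := fun m => AddMonoidAlgebra.single (Multiplicative.toAdd m (Fin.last n))
        (AddMonoidAlgebra.single (fun i : Fin n => Multiplicative.toAdd m i.castSucc) 1)
      map_one' := rfl
      map_mul' := fun m m' => by
        simp only [toAdd_mul, AddMonoidAlgebra.single_mul_single, one_mul]
        rfl }
    (fun x y => Commute.all _ _)

theorem E_single (a : Fin (n + 1) → ℤ) (b : k) :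
    E k n (AddMonoidAlgebra.single a b) =
      AddMonoidAlgebra.single (a (Fin.last n))
        (AddMonoidAlgebra.single (fun i : Fin n => a i.castSucc) b) := by
  show AddMonoidAlgebra.liftNC _ _ (AddMonoidAlgebra.single a b) = _
  rw [AddMonoidAlgebra.liftNC_single]
  show LaurentPolynomial.C (AddMonoidAlgebra.single 0 b) * AddMonoidAlgebra.single (a (Fin.last n))
    (AddMonoidAlgebra.single (fun i : Fin n => a i.castSucc) 1) = _
  show AddMonoidAlgebra.single (0 : ℤ) (AddMonoidAlgebra.single (0 : Fin n → ℤ) b) * _ = _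
  rw [AddMonoidAlgebra.single_mul_single, AddMonoidAlgebra.single_mul_single]
  simp

/-- The backward ring hom. -/
def B : LaurentPolynomial (Rn k n) →+* AddMonoidAlgebra k (Fin (n + 1) → ℤ) :=
  AddMonoidAlgebra.liftNCRingHom
    (AddMonoidAlgebra.mapDomainRingHom k (iota n))
    { toFun := fun z => AddMonoidAlgebra.single (zeta n (Multiplicative.toAdd z)) 1
      map_one' := by
        show AddMonoidAlgebra.single (zeta n (Multiplicative.toAdd (1 : Multiplicative ℤ))) 1 = 1
        rw [show (Multiplicative.toAdd (1 : Multiplicative ℤ)) = 0 from rfl, map_zero]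
        rfl
      map_mul' := fun z z' => by
        show AddMonoidAlgebra.single _ _ = AddMonoidAlgebra.single _ _ * AddMonoidAlgebra.single _ _
        rw [AddMonoidAlgebra.single_mul_single, one_mul, toAdd_mul, map_add] }
    (fun x y => Commute.all _ _)

theorem B_single (z : ℤ) (r : Rn k n) :
    B k n (AddMonoidAlgebra.single z r) =
      AddMonoidAlgebra.mapDomainRingHom k (iota n) r * AddMonoidAlgebra.single (zeta n z) 1 := by
  show AddMonoidAlgebra.liftNC _ _ (AddMonoidAlgebra.single z r) = _
  rw [AddMonoidAlgebra.liftNC_single]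
  rfl

theorem mapDomainRingHom_single (a : Fin n → ℤ) (b : k) :
    AddMonoidAlgebra.mapDomainRingHom k (iota n) (AddMonoidAlgebra.single a b) =
      AddMonoidAlgebra.single (iota n a) b := by
  show AddMonoidAlgebra.mapDomain (iota n) (AddMonoidAlgebra.single a b) = _
  rw [AddMonoidAlgebra.mapDomain_single]

theorem BE (x : AddMonoidAlgebra k (Fin (n + 1) → ℤ)) : B k n (E k n x) = x := by
  induction x using AddMonoidAlgebra.induction with
  | zero => simp
  | single_add a b f _ _ ih =>
    rw [map_add, map_add, ih, E_single, B_single, mapDomainRingHom_single,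
      AddMonoidAlgebra.single_mul_single, mul_one]
    congr 2
    funext i
    refine Fin.lastCases ?_ (fun j => ?_) i
    · simp [iota, zeta]
    · simp [iota, zeta, j.isLt.ne]

theorem E_mapDomain (r : Rn k n) :
    E k n (AddMonoidAlgebra.mapDomainRingHom k (iota n) r) = LaurentPolynomial.C r := by
  induction r using AddMonoidAlgebra.induction with
  | zero => simp
  | single_add a b f _ _ ih =>
    rw [map_add, map_add, ih, mapDomainRingHom_single, E_single, map_add]
    congr 1
    show _ = AddMonoidAlgebra.single (0 : ℤ) (AddMonoidAlgebra.single a b)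
    have h1 : iota n a (Fin.last n) = 0 := by simp [iota]
    have h2 : (fun i : Fin n => iota n a i.castSucc) = a := by
      funext j; simp [iota]
    rw [h1, h2]

theorem EB (x : LaurentPolynomial (Rn k n)) : E k n (B k n x) = x := by
  induction x using AddMonoidAlgebra.induction with
  | zero => simp
  | single_add z r f _ _ ih =>
    rw [map_add, map_add, ih, B_single, map_mul, E_mapDomain, E_single]
    congr 1
    have h1 : zeta n z (Fin.last n) = z := by simp [zeta]
    have h2 : (fun i : Fin n => zeta n z i.castSucc) = 0 := by
      funext j; simp [zeta, j.isLt.ne]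
    rw [h1, h2]
    show LaurentPolynomial.C r * AddMonoidAlgebra.single z (1 : Rn k n) = _
    show AddMonoidAlgebra.single (0 : ℤ) r * _ = _
    rw [AddMonoidAlgebra.single_mul_single, mul_one, zero_add]

/-- The ring equivalence `k[ℤ^{n+1}] ≃+* (k[ℤ^n])[T;T⁻¹]`. -/
def Eequiv : AddMonoidAlgebra k (Fin (n + 1) → ℤ) ≃+* LaurentPolynomial (Rn k n) :=
  RingEquiv.ofRingHom (E k n) (B k n) (RingHom.ext (EB k n)) (RingHom.ext (BE k n))

theorem Eequiv_apply (x : AddMonoidAlgebra k (Fin (n + 1) → ℤ)) :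
    Eequiv k n x = E k n x := rfl

/-- Restriction of a Laurent polynomial supported on `ℤ^n × {0}` to `ℤ^n`. -/
def restrict (Φ : AddMonoidAlgebra k (Fin (n + 1) → ℤ)) : Rn k n :=
  AddMonoidAlgebra.mapDomain (fun (m : Fin (n + 1) → ℤ) (i : Fin n) => m i.castSucc) Φ

theorem restrict_add (x y : AddMonoidAlgebra k (Fin (n + 1) → ℤ)) :
    restrict k n (x + y) = restrict k n x + restrict k n y :=
  AddMonoidAlgebra.mapDomain_add _ x y

theorem restrict_single (a : Fin (n + 1) → ℤ) (b : k) :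
    restrict k n (AddMonoidAlgebra.single a b) =
      AddMonoidAlgebra.single (fun i : Fin n => a i.castSucc) b :=
  AddMonoidAlgebra.mapDomain_single

theorem restrict_zero : restrict k n 0 = 0 :=
  AddMonoidAlgebra.mapDomain_zero _

theorem E_of_supported (Φ : AddMonoidAlgebra k (Fin (n + 1) → ℤ))
    (h : ∀ m ∈ Φ.coeff.support, m (Fin.last n) = 0) :
    E k n Φ = LaurentPolynomial.C (restrict k n Φ) := by
  induction Φ using AddMonoidAlgebra.induction with
  | zero => rw [restrict_zero, map_zero, map_zero]
  | single_add a b f haf hb ih =>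
    have ha0 : a (Fin.last n) = 0 := by
      apply h
      rw [Finsupp.mem_support_iff, AddMonoidAlgebra.coeff_add, Finsupp.add_apply,
        AddMonoidAlgebra.coeff_single, Finsupp.single_eq_same,
        Finsupp.notMem_support_iff.mp haf, add_zero]
      exact hb
    have hf : ∀ m ∈ f.coeff.support, m (Fin.last n) = 0 := by
      intro m hm
      apply h
      rw [Finsupp.mem_support_iff, AddMonoidAlgebra.coeff_add, Finsupp.add_apply,
        AddMonoidAlgebra.coeff_single, Finsupp.single_eq_of_ne (by rintro rfl; exact haf hm), zero_add]
      exact Finsupp.mem_support_iff.mp hm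
    rw [map_add, restrict_add, restrict_single, ih hf, E_single, ha0, map_add]
    rfl

theorem irreducible_T_sub_C {R : Type*} [CommRing R] [IsDomain R] {a : R} (ha : a ≠ 0) :
    Irreducible (LaurentPolynomial.T 1 - LaurentPolynomial.C a) := by
  haveI : IsDomain (LaurentPolynomial R) := NoZeroDivisors.to_isDomain _
  haveI := LaurentPolynomial.isLocalization (R := R)
  have hXa : (Polynomial.X - Polynomial.C a) ≠ 0 := Polynomial.X_sub_C_ne_zero a
  set I : Ideal R[X] := Ideal.span {Polynomial.X - Polynomial.C a} with hIdef
  have hI : I.IsPrime := by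
    rw [← Ideal.Quotient.isDomain_iff_prime]
    exact Function.Injective.isDomain (Polynomial.quotientSpanXSubCAlgEquiv a).toRingEquiv.toRingHom
      (Polynomial.quotientSpanXSubCAlgEquiv a).toRingEquiv.injective
  have hdisj : Disjoint (Submonoid.powers (Polynomial.X : R[X]) : Set R[X]) (I : Set R[X]) := by
    rw [Set.disjoint_left]
    rintro x ⟨m, rfl⟩ hxI
    rw [SetLike.mem_coe, hIdef, Ideal.mem_span_singleton] at hxI
    obtain ⟨q, hq⟩ := hxI
    have := congrArg (Polynomial.eval a) hq
    simp only [Polynomial.eval_pow, Polynomial.eval_X, Polynomial.eval_mul, Polynomial.eval_sub,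
      Polynomial.eval_C, sub_self, zero_mul] at this
    rcases Nat.eq_zero_or_pos m with rfl | hm
    · simp at this
    · exact ha ((pow_eq_zero_iff hm.ne').mp this)
  have hP :=
    IsLocalization.isPrime_of_isPrime_disjoint (Submonoid.powers (Polynomial.X : R[X]))
      (LaurentPolynomial R) I hI hdisj
  rw [hIdef, Ideal.map_span, Set.image_singleton] at hP
  have h1 : algebraMap R[X] (LaurentPolynomial R) (Polynomial.X - Polynomial.C a) =
      LaurentPolynomial.T 1 - LaurentPolynomial.C a := by
    rw [LaurentPolynomial.algebraMap_eq_toLaurent]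
    simp
  rw [h1] at hP
  have hne : (LaurentPolynomial.T 1 - LaurentPolynomial.C a : LaurentPolynomial R) ≠ 0 := by
    rw [← h1, LaurentPolynomial.algebraMap_eq_toLaurent]
    intro h
    exact hXa (Polynomial.toLaurent_injective (by simpa using h))
  exact ((Ideal.span_singleton_prime hne).mp hP).irreducible

end XdSubPhiAux

end

/-- Let `p` be a prime, `d ≥ 2`, and let `Φ` be a nonzero Laurent polynomial
over `𝔽_p` in the first `d−1` variables (i.e. an element of the Laurent polynomial ring
`R_d = AddMonoidAlgebra (ZMod p) (Fin d → ℤ)` whose support is contained in `ℤ^{d−1} × {0}`).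
Then `X_d − Φ` is irreducible in `R_d`, where `X_d` is the monomial with exponent
`e_d = (0,…,0,1)`. -/
theorem Xd_sub_Phi_irreducible (p : ℕ) [Fact p.Prime] (d : ℕ) (hd : 2 ≤ d)
    (Φ : AddMonoidAlgebra (ZMod p) (Fin d → ℤ)) (hΦ : Φ ≠ 0)
    (hsupp : ∀ m ∈ Φ.coeff.support, m ⟨d - 1, by omega⟩ = 0) :
    Irreducible
      ((AddMonoidAlgebra.single (fun i : Fin d => if (i : ℕ) = d - 1 then (1 : ℤ) else 0)
        (1 : ZMod p)) - Φ) := by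
  obtain ⟨n, rfl⟩ : ∃ n, d = n + 1 := ⟨d - 1, by omega⟩
  simp only [Nat.add_sub_cancel] at hsupp ⊢
  haveI : IsDomain (XdSubPhiAux.Rn (ZMod p) n) := NoZeroDivisors.to_isDomain _
  set Φ' : XdSubPhiAux.Rn (ZMod p) n := XdSubPhiAux.restrict (ZMod p) n Φ with hΦ'def
  have hlast : ∀ m ∈ Φ.coeff.support, m (Fin.last n) = 0 := by
    intro m hm
    exact hsupp m hm
  have hEΦ : XdSubPhiAux.E (ZMod p) n Φ = LaurentPolynomial.C Φ' :=
    XdSubPhiAux.E_of_supported (ZMod p) n Φ hlast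
  have hΦ'ne : Φ' ≠ 0 := by
    intro h0
    apply hΦ
    have hE0 : XdSubPhiAux.E (ZMod p) n Φ = 0 := by rw [hEΦ, h0, map_zero]
    have hbe := XdSubPhiAux.BE (ZMod p) n Φ
    rw [hE0, map_zero] at hbe
    exact hbe.symm
  have hEe : XdSubPhiAux.E (ZMod p) n
      (AddMonoidAlgebra.single (fun i : Fin (n + 1) => if (i : ℕ) = n then (1 : ℤ) else 0)
        (1 : ZMod p)) = LaurentPolynomial.T 1 := by
    rw [XdSubPhiAux.E_single]
    have h2 : (fun i : Fin n =>
        (fun i : Fin (n + 1) => if (i : ℕ) = n then (1 : ℤ) else 0) i.castSucc) = 0 := by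
      funext j
      simp [j.isLt.ne]
    rw [h2, show (if ((Fin.last n : ℕ) = n) then (1 : ℤ) else 0) = 1 from by simp]
    rfl
  refine (MulEquiv.irreducible_iff (XdSubPhiAux.Eequiv (ZMod p) n)).mp ?_
  rw [XdSubPhiAux.Eequiv_apply, map_sub, hEΦ, hEe]
  exact XdSubPhiAux.irreducible_T_sub_C hΦ'ne
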